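/- At any equilibrium (θ*, ω*, λ*) of the closed-loop gather-and-broadcast system, the frequency vector satisfies ω* = 0 and λ* is the unique solution of Σ_{i∈V} (P_i + (J_i′)^{-1}(λ*)) = 0; moreover the injections u_i* = (J_i′)^{-1}(λ*) satisfy the KKT conditions of the economic dispatch problem min Σ_i J_i(u_i) subject to Σ_i (P_i + u_i) = 0, hence are optimal. -/

import Mathlib

open Set

/-- Subgradient inequality for a differentiable strictly convex function on `univ`. -/
lemma gb_subgrad {f : ℝ → ℝ} (hconv : StrictConvexOn ℝ univ f)
    (hdiff : Differentiable ℝ f) (x y : ℝ) :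
    f x + deriv f x * (y - x) ≤ f y := by
  rcases lt_trichotomy x y with h | h | h
  · have hs := hconv.deriv_lt_slope (mem_univ x) (mem_univ y) h (hdiff x)
    rw [slope_def_field, lt_div_iff₀ (sub_pos.mpr h)] at hs
    nlinarith
  · simp [h]
  · have hs := hconv.slope_lt_deriv (mem_univ y) (mem_univ x) h (hdiff x)
    rw [slope_def_field] at hs
    have hpos : 0 < x - y := sub_pos.mpr h
    rw [div_lt_iff₀ hpos] at hs
    nlinarith
/-- **Closed-loop equilibria of the gather-and-broadcast controlled power system.**
At any equilibrium `(θ⋆, ω⋆, λ⋆)` of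
`θ̇ = ω`, `M ω̇ = -D ω - ∇U(θ) + P + (J')⁻¹(λ)`, `k λ̇ = -cᵀ ω`,
we have `ω⋆ = 0`, the power balance `∑ i (P i + g i λ⋆) = 0` holds and determines
`λ⋆` uniquely, and the injections `u⋆ i = g i λ⋆` (with `g i = (deriv (J i))⁻¹`)
are optimal for the economic dispatch problem. -/
theorem gather_broadcast_stmt2
    {N : ℕ} (hN : 0 < N)
    (J : Fin N → ℝ → ℝ) (g : Fin N → ℝ → ℝ) (P : Fin N → ℝ)
    (U : (Fin N → ℝ) → ℝ) (gradU : (Fin N → ℝ) → Fin N → ℝ)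
    (M D c : Fin N → ℝ) (k : ℝ) (hk : 0 < k)
    (hc : ∑ i, c i = 1) (hcpos : ∀ i, 0 ≤ c i)
    (hdiff : ∀ i, Differentiable ℝ (J i))
    (hconv : ∀ i, StrictConvexOn ℝ univ (J i))
    (hinv : ∀ i, ∀ y : ℝ, deriv (J i) (g i y) = y)
    (hgrad : ∀ θ : Fin N → ℝ, ∑ i, gradU θ i = 0)
    -- equilibrium (θ⋆, ω⋆, λ⋆): all time-derivatives vanish in the closed loop
    (θs ωs : Fin N → ℝ) (lams : ℝ)
    (heq1 : ∀ i, ωs i = 0)  -- from θ̇ = ω = 0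
    (heq2 : ∀ i, 0 = -(D i * ωs i) - gradU θs i + P i + g i lams)
    (heq3 : 0 = -∑ i, c i * ωs i) :
    ωs = 0 ∧
    (∑ i, (P i + g i lams)) = 0 ∧
    (∀ μ : ℝ, (∑ i, (P i + g i μ)) = 0 → μ = lams) ∧
    (∀ u : Fin N → ℝ, (∑ i, (P i + u i)) = 0 →
      ∑ i, J i (g i lams) ≤ ∑ i, J i (u i)) := by
  -- g i is strictly monotone
  have hgmono : ∀ i : Fin N, StrictMono (g i) := by
    intro i
    intro a b hab
    by_contra hle
    push_neg at hle
    have hmono := (hconv i).strictMonoOn_deriv (fun x _ => hdiff i x)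
    rcases lt_or_eq_of_le hle with h | h
    · have := hmono (mem_univ _) (mem_univ _) h
      rw [hinv, hinv] at this
      exact absurd this (not_lt.mpr hab.le)
    · have : deriv (J i) (g i a) = deriv (J i) (g i b) := by rw [h]
      rw [hinv, hinv] at this
      exact hab.ne this
  have hbal : (∑ i, (P i + g i lams)) = 0 := by
    have : ∑ i, (P i + g i lams) = ∑ i, (D i * ωs i + gradU θs i) := by
      apply Finset.sum_congr rfl
      intro i _
      have := heq2 i
      linarith
    rw [this, Finset.sum_add_distrib, hgrad θs]
    have : ∀ i : Fin N, D i * ωs i = 0 := by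
      intro i; rw [heq1 i]; ring
    simp [this]
  refine ⟨funext heq1, hbal, ?_, ?_⟩
  · intro μ hμ
    by_contra hne
    rcases lt_or_gt_of_ne hne with h | h
    · have : ∑ i, (P i + g i μ) < ∑ i, (P i + g i lams) := by
        apply Finset.sum_lt_sum_of_nonempty
        · exact Finset.univ_nonempty_iff.mpr ⟨⟨0, hN⟩⟩
        · intro i _
          exact add_lt_add_right (hgmono i h) _
      rw [hμ, hbal] at this
      exact lt_irrefl 0 this
    · have : ∑ i, (P i + g i lams) < ∑ i, (P i + g i μ) := by
        apply Finset.sum_lt_sum_of_nonempty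
        · exact Finset.univ_nonempty_iff.mpr ⟨⟨0, hN⟩⟩
        · intro i _
          exact add_lt_add_right (hgmono i h) _
      rw [hμ, hbal] at this
      exact lt_irrefl 0 this
  · intro u hu
    have key : ∀ i : Fin N,
        J i (g i lams) + lams * (u i - g i lams) ≤ J i (u i) := by
      intro i
      have := gb_subgrad (hconv i) (hdiff i) (g i lams) (u i)
      rwa [hinv i lams] at this
    calc ∑ i, J i (g i lams)
        = ∑ i, (J i (g i lams) + lams * (u i - g i lams)) := by
          rw [Finset.sum_add_distrib, ← Finset.mul_sum]
          have hsum : ∑ i, (u i - g i lams) = 0 := by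
            have h1 : ∑ i, u i = -∑ i, P i := by
              have := hu
              rw [Finset.sum_add_distrib] at this
              linarith
            have h2 : ∑ i, g i lams = -∑ i, P i := by
              have := hbal
              rw [Finset.sum_add_distrib] at this
              linarith
            rw [Finset.sum_sub_distrib, h1, h2]; ring
          rw [hsum, mul_zero, add_zero]
      _ ≤ ∑ i, J i (u i) := Finset.sum_le_sum (fun i _ => key i)
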